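/- Let H be the subgroup of U₄(ℤ/3) consisting of all matrices N(a,u,v,w) with rows (1,a,u,v), (0,1,a,w), (0,0,1,a), (0,0,0,1). Then H is a subgroup of U₄(ℤ/3), its center consists of all N(a,u,v,w) with a = 0 and u = w, and its commutator subgroup consists of all N(0,0,v,0) with v ∈ ℤ/3. -/

import Mathlib

/-- The upper unitriangular 4×4 matrix `M(a₁,a₂,a₃,u,v,w)` over `ℤ/ℓ`. -/
def M4 {ℓ : ℕ} (a₁ a₂ a₃ u v w : ZMod ℓ) : Matrix (Fin 4) (Fin 4) (ZMod ℓ) :=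
  !![1, a₁, u, v; 0, 1, a₂, w; 0, 0, 1, a₃; 0, 0, 0, 1]

theorem M4_mul {ℓ : ℕ} (a₁ a₂ a₃ u v w b₁ b₂ b₃ x y z : ZMod ℓ) :
    M4 a₁ a₂ a₃ u v w * M4 b₁ b₂ b₃ x y z =
      M4 (a₁ + b₁) (a₂ + b₂) (a₃ + b₃) (u + a₁ * b₂ + x)
        (v + a₁ * z + u * b₃ + y) (w + a₂ * b₃ + z) := by
  ext i j
  fin_cases i <;> fin_cases j <;>
    simp [M4, Matrix.mul_apply, Fin.sum_univ_four, Matrix.vecHead, Matrix.vecTail] <;> ring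

theorem M4_one {ℓ : ℕ} : (M4 0 0 0 0 0 0 : Matrix (Fin 4) (Fin 4) (ZMod ℓ)) = 1 := by
  ext i j
  fin_cases i <;> fin_cases j <;> simp [M4, Matrix.one_apply, Matrix.vecHead, Matrix.vecTail]

/-- `U₄(ℤ/ℓ)` as a subgroup of the units of the matrix ring. -/
def U4 (ℓ : ℕ) : Subgroup (Matrix (Fin 4) (Fin 4) (ZMod ℓ))ˣ where
  carrier := {A | ∃ a₁ a₂ a₃ u v w : ZMod ℓ, (A : Matrix (Fin 4) (Fin 4) (ZMod ℓ)) = M4 a₁ a₂ a₃ u v w}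
  one_mem' := ⟨0, 0, 0, 0, 0, 0, by rw [Units.val_one, M4_one]⟩
  mul_mem' := by
    rintro A B ⟨a₁, a₂, a₃, u, v, w, hA⟩ ⟨b₁, b₂, b₃, x, y, z, hB⟩
    exact ⟨a₁ + b₁, a₂ + b₂, a₃ + b₃, u + a₁ * b₂ + x, v + a₁ * z + u * b₃ + y,
      w + a₂ * b₃ + z, by rw [Units.val_mul, hA, hB, M4_mul]⟩
  inv_mem' := by
    rintro A ⟨a₁, a₂, a₃, u, v, w, hA⟩
    refine ⟨-a₁, -a₂, -a₃, a₁ * a₂ - u, -v + a₁ * w + u * a₃ - a₁ * a₂ * a₃, a₂ * a₃ - w, ?_⟩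
    have hB : (A : Matrix (Fin 4) (Fin 4) (ZMod ℓ)) *
        M4 (-a₁) (-a₂) (-a₃) (a₁ * a₂ - u) (-v + a₁ * w + u * a₃ - a₁ * a₂ * a₃) (a₂ * a₃ - w)
          = 1 := by
      rw [hA, M4_mul]
      have : M4 (a₁ + -a₁) (a₂ + -a₂) (a₃ + -a₃) (u + a₁ * -a₂ + (a₁ * a₂ - u))
          (v + a₁ * (a₂ * a₃ - w) + u * -a₃ + (-v + a₁ * w + u * a₃ - a₁ * a₂ * a₃))
          (w + a₂ * -a₃ + (a₂ * a₃ - w)) = M4 0 0 0 0 0 0 (ℓ := ℓ) := by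
        congr 1 <;> ring
      rw [this, M4_one]
    calc (↑A⁻¹ : Matrix (Fin 4) (Fin 4) (ZMod ℓ))
        = ↑A⁻¹ * ((↑A : Matrix (Fin 4) (Fin 4) (ZMod ℓ)) *
            M4 (-a₁) (-a₂) (-a₃) (a₁ * a₂ - u)
              (-v + a₁ * w + u * a₃ - a₁ * a₂ * a₃) (a₂ * a₃ - w)) := by rw [hB, mul_one]
      _ = ((↑A⁻¹ : Matrix (Fin 4) (Fin 4) (ZMod ℓ)) * ↑A) *
            M4 (-a₁) (-a₂) (-a₃) (a₁ * a₂ - u)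
              (-v + a₁ * w + u * a₃ - a₁ * a₂ * a₃) (a₂ * a₃ - w) := by rw [← mul_assoc]
      _ = M4 (-a₁) (-a₂) (-a₃) (a₁ * a₂ - u)
              (-v + a₁ * w + u * a₃ - a₁ * a₂ * a₃) (a₂ * a₃ - w) := by
            rw [Units.inv_mul, one_mul]

/-- The matrix `N(a,u,v,w)` over `ℤ/3`, with rows
`(1,a,u,v)`, `(0,1,a,w)`, `(0,0,1,a)`, `(0,0,0,1)`. -/
def N4 (a u v w : ZMod 3) : Matrix (Fin 4) (Fin 4) (ZMod 3) :=
  M4 a a a u v w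

/-- The subgroup `H` of `U₄(ℤ/3)` of all matrices `N(a,u,v,w)`. -/
def HU : Subgroup (Matrix (Fin 4) (Fin 4) (ZMod 3))ˣ where
  carrier := {A | ∃ a u v w : ZMod 3, (A : Matrix (Fin 4) (Fin 4) (ZMod 3)) = N4 a u v w}
  one_mem' := ⟨0, 0, 0, 0, by rw [Units.val_one]; exact M4_one.symm⟩
  mul_mem' := by
    rintro A B ⟨a, u, v, w, hA⟩ ⟨b, x, y, z, hB⟩
    exact ⟨a + b, u + a * b + x, v + a * z + u * b + y, w + a * b + z,
      by rw [Units.val_mul, hA, hB, N4, N4, M4_mul]; rfl⟩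
  inv_mem' := by
    rintro A ⟨a, u, v, w, hA⟩
    refine ⟨-a, a * a - u, -v + a * w + u * a - a * a * a, a * a - w, ?_⟩
    have hB : (A : Matrix (Fin 4) (Fin 4) (ZMod 3)) *
        N4 (-a) (a * a - u) (-v + a * w + u * a - a * a * a) (a * a - w) = 1 := by
      rw [hA, N4, N4, M4_mul]
      have : M4 (a + -a) (a + -a) (a + -a) (u + a * -a + (a * a - u))
          (v + a * (a * a - w) + u * -a + (-v + a * w + u * a - a * a * a))
          (w + a * -a + (a * a - w)) = M4 0 0 0 0 0 0 (ℓ := 3) := by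
        congr 1 <;> ring
      rw [this, M4_one]
    calc (↑A⁻¹ : Matrix (Fin 4) (Fin 4) (ZMod 3))
        = ↑A⁻¹ * ((↑A : Matrix (Fin 4) (Fin 4) (ZMod 3)) *
            N4 (-a) (a * a - u) (-v + a * w + u * a - a * a * a) (a * a - w)) := by
          rw [hB, mul_one]
      _ = ((↑A⁻¹ : Matrix (Fin 4) (Fin 4) (ZMod 3)) * ↑A) *
            N4 (-a) (a * a - u) (-v + a * w + u * a - a * a * a) (a * a - w) := by
          rw [← mul_assoc]
      _ = N4 (-a) (a * a - u) (-v + a * w + u * a - a * a * a) (a * a - w) := by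
          rw [Units.inv_mul, one_mul]

theorem N4_mul (a u v w b x y z : ZMod 3) :
    N4 a u v w * N4 b x y z =
      N4 (a + b) (u + a * b + x) (v + a * z + u * b + y) (w + a * b + z) := by
  rw [N4, N4, M4_mul]; rfl

theorem N4_one : N4 0 0 0 0 = 1 := M4_one

theorem N4_inj {a u v w a' u' v' w' : ZMod 3} (h : N4 a u v w = N4 a' u' v' w') :
    a = a' ∧ u = u' ∧ v = v' ∧ w = w' := by
  refine ⟨?_, ?_, ?_, ?_⟩
  · have := congrFun (congrFun h 0) 1; simpa [N4, M4] using this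
  · have := congrFun (congrFun h 0) 2; simpa [N4, M4] using this
  · have := congrFun (congrFun h 0) 3; simpa [N4, M4] using this
  · have := congrFun (congrFun h 1) 3; simpa [N4, M4] using this

/-- The matrix `N4 a u v w` as a unit. -/
def Nunit (a u v w : ZMod 3) : (Matrix (Fin 4) (Fin 4) (ZMod 3))ˣ where
  val := N4 a u v w
  inv := N4 (-a) (a * a - u) (-v + a * w + u * a - a * a * a) (a * a - w)
  val_inv := by
    rw [N4_mul]
    have : N4 (a + -a) (u + a * -a + (a * a - u))
        (v + a * (a * a - w) + u * -a + (-v + a * w + u * a - a * a * a))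
        (w + a * -a + (a * a - w)) = N4 0 0 0 0 := by
      unfold N4; congr 1 <;> ring
    rw [this, N4_one]
  inv_val := by
    rw [N4_mul]
    have : N4 (-a + a) (a * a - u + -a * a + u)
        (-v + a * w + u * a - a * a * a + -a * w + (a * a - u) * a + v)
        (a * a - w + -a * a + w) = N4 0 0 0 0 := by
      unfold N4; congr 1 <;> ring
    rw [this, N4_one]

theorem Nunit_inv (a u v w : ZMod 3) :
    (Nunit a u v w)⁻¹ =
      Nunit (-a) (a * a - u) (-v + a * w + u * a - a * a * a) (a * a - w) := by
  ext; rfl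

/-- `Nunit` as an element of `HU`. -/
def nH (a u v w : ZMod 3) : HU := ⟨Nunit a u v w, ⟨a, u, v, w, rfl⟩⟩

theorem nH_mul (a u v w b x y z : ZMod 3) :
    nH a u v w * nH b x y z =
      nH (a + b) (u + a * b + x) (v + a * z + u * b + y) (w + a * b + z) := by
  apply Subtype.ext; apply Units.ext
  show N4 a u v w * N4 b x y z = _
  rw [N4_mul]; rfl

theorem nH_inv (a u v w : ZMod 3) :
    (nH a u v w)⁻¹ =
      nH (-a) (a * a - u) (-v + a * w + u * a - a * a * a) (a * a - w) := by
  apply Subtype.ext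
  show (Nunit a u v w)⁻¹ = _
  rw [Nunit_inv]; rfl

theorem nH_eq (A : HU) {a u v w : ZMod 3}
    (h : ((A : (Matrix (Fin 4) (Fin 4) (ZMod 3))ˣ) : Matrix (Fin 4) (Fin 4) (ZMod 3)) =
      N4 a u v w) : A = nH a u v w := by
  apply Subtype.ext; apply Units.ext
  calc ((A : (Matrix (Fin 4) (Fin 4) (ZMod 3))ˣ) : Matrix (Fin 4) (Fin 4) (ZMod 3))
      = N4 a u v w := h
    _ = _ := rfl

/-- The candidate commutator subgroup of `HU`. -/
def KH : Subgroup HU where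
  carrier := {A | ∃ v : ZMod 3, ((A : (Matrix (Fin 4) (Fin 4) (ZMod 3))ˣ) :
      Matrix (Fin 4) (Fin 4) (ZMod 3)) = N4 0 0 v 0}
  one_mem' := ⟨0, by rw [show ((((1 : HU) : (Matrix (Fin 4) (Fin 4) (ZMod 3))ˣ)) :
      Matrix (Fin 4) (Fin 4) (ZMod 3)) = 1 from rfl, N4_one]⟩
  mul_mem' := by
    rintro A B ⟨v, hA⟩ ⟨y, hB⟩
    refine ⟨v + y, ?_⟩
    show ((A : (Matrix (Fin 4) (Fin 4) (ZMod 3))ˣ) : Matrix (Fin 4) (Fin 4) (ZMod 3)) *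
      ((B : (Matrix (Fin 4) (Fin 4) (ZMod 3))ˣ) : Matrix (Fin 4) (Fin 4) (ZMod 3)) = _
    rw [hA, hB, N4_mul]; unfold N4; congr 1 <;> ring
  inv_mem' := by
    rintro A ⟨v, hA⟩
    refine ⟨-v, ?_⟩
    have : A = nH 0 0 v 0 := nH_eq A hA
    rw [this, nH_inv]
    show N4 (-0) (0 * 0 - 0) (-v + 0 * 0 + 0 * 0 - 0 * 0 * 0) (0 * 0 - 0) = _
    unfold N4; congr 1 <;> ring

open scoped commutatorElement

theorem comm_nH (a u v w b x y z : ZMod 3) :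
    ⁅nH a u v w, nH b x y z⁆ = nH 0 0 (a * z + u * b - b * w - x * a) 0 := by
  rw [commutatorElement_def, nH_inv, nH_inv, nH_mul, nH_mul, nH_mul]
  unfold nH; congr 1
  unfold Nunit; congr 1 <;> (unfold N4; congr 1 <;> ring)

/-- `H` is a subgroup of `U₄(ℤ/3)`; its center consists of the matrices
`N(0,u,v,u)` (i.e. `a = 0` and `u = w`), and its commutator subgroup consists of the
matrices `N(0,0,v,0)` with `v ∈ ℤ/3`. -/
theorem H_center_and_commutator :
    HU ≤ U4 3 ∧
    (∀ A : HU, A ∈ Subgroup.center HU ↔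
      ∃ u v : ZMod 3, ((A : (Matrix (Fin 4) (Fin 4) (ZMod 3))ˣ) :
        Matrix (Fin 4) (Fin 4) (ZMod 3)) = N4 0 u v u) ∧
    (∀ A : HU, A ∈ commutator HU ↔
      ∃ v : ZMod 3, ((A : (Matrix (Fin 4) (Fin 4) (ZMod 3))ˣ) :
        Matrix (Fin 4) (Fin 4) (ZMod 3)) = N4 0 0 v 0) := by
  refine ⟨?_, ?_, ?_⟩
  · rintro A ⟨a, u, v, w, hA⟩
    exact ⟨a, a, a, u, v, w, hA⟩
  · intro A
    constructor
    · intro hc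
      obtain ⟨a, u, v, w, hA⟩ := A.2
      rw [Subgroup.mem_center_iff] at hc
      have h1 := hc (nH 1 0 0 0)
      have h2 := hc (nH 0 0 0 1)
      have e1 : N4 1 0 0 0 * N4 a u v w = N4 a u v w * N4 1 0 0 0 := by
        have := congrArg (fun B : HU => ((B : (Matrix (Fin 4) (Fin 4) (ZMod 3))ˣ) :
          Matrix (Fin 4) (Fin 4) (ZMod 3))) h1
        simpa [Subgroup.coe_mul, Units.val_mul, hA, nH, Nunit] using this
      have e2 : N4 0 0 0 1 * N4 a u v w = N4 a u v w * N4 0 0 0 1 := by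
        have := congrArg (fun B : HU => ((B : (Matrix (Fin 4) (Fin 4) (ZMod 3))ˣ) :
          Matrix (Fin 4) (Fin 4) (ZMod 3))) h2
        simpa [Subgroup.coe_mul, Units.val_mul, hA, nH, Nunit] using this
      rw [N4_mul, N4_mul] at e1 e2
      have huw : w = u := by
        have := (N4_inj e1).2.2.1
        -- 0 + 1 * w + 0 * a + v = v + a * 0 + u * 1 + 0
        linear_combination this
      have ha : a = 0 := by
        have := (N4_inj e2).2.2.1
        -- 0 + 0 * w + 0 * a + v = v + a * 1 + 0 * 1 + 0
        linear_combination -this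
      exact ⟨u, v, by rw [hA, ha, huw]⟩
    · rintro ⟨u, v, hA⟩
      rw [Subgroup.mem_center_iff]
      intro g
      obtain ⟨b, x, y, z, hg⟩ := g.2
      have hA' : A = nH 0 u v u := nH_eq A hA
      have hg' : g = nH b x y z := nH_eq g hg
      rw [hA', hg', nH_mul, nH_mul]
      unfold nH; congr 1
      unfold Nunit; congr 1 <;> (unfold N4; congr 1 <;> ring)
  · intro A
    constructor
    · intro hc
      have hle : commutator HU ≤ KH := by
        rw [commutator_def]
        rw [Subgroup.commutator_le]
        intro g _ h _
        obtain ⟨a, u, v, w, hgm⟩ := g.2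
        obtain ⟨b, x, y, z, hhm⟩ := h.2
        rw [nH_eq g hgm, nH_eq h hhm, comm_nH]
        exact ⟨a * z + u * b - b * w - x * a, rfl⟩
      exact hle hc
    · rintro ⟨v, hA⟩
      have hA' : A = nH 0 0 v 0 := nH_eq A hA
      have hcomm : ⁅nH 1 0 0 0, nH 0 1 0 0⁆ ∈ commutator HU :=
        Subgroup.commutator_mem_commutator (Subgroup.mem_top _) (Subgroup.mem_top _)
      rw [comm_nH] at hcomm
      have hbase : nH 0 0 (2 : ZMod 3) 0 ∈ commutator HU := by
        have : (1 * 0 + 0 * 0 - 0 * 0 - 1 * 1 : ZMod 3) = 2 := by decide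
        rwa [this] at hcomm
      rw [hA']
      have h3 : ∀ k : ZMod 3, nH 0 0 k 0 ∈ commutator HU := by
        intro k
        rcases (show k = 0 ∨ k = 1 ∨ k = 2 by revert k; decide) with rfl | rfl | rfl
        · have : nH 0 0 (0 : ZMod 3) 0 = 1 := by
            apply Subtype.ext; apply Units.ext
            show N4 0 0 0 0 = 1
            exact N4_one
          rw [this]; exact Subgroup.one_mem _
        · have : nH 0 0 (2 : ZMod 3) 0 * nH 0 0 (2 : ZMod 3) 0 = nH 0 0 (1 : ZMod 3) 0 := by
            rw [nH_mul]
            congr 1 <;> decide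
          rw [← this]; exact Subgroup.mul_mem _ hbase hbase
        · exact hbase
      exact h3 v
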